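/- Let E be a complete real Hilbert space, ε > 0, and T : E → E a surjective ε-isometry with T(0) = 0. Then the limit I(x) = lim_{n→∞} T(2ⁿx)/2ⁿ exists for every x ∈ E, and I is an isometry of E satisfying ‖T(x) − I(x)‖ ≤ 10ε for all x ∈ E. -/

import Mathlib

open Filter RealInnerProductSpace
set_option maxHeartbeats 1000000

lemma hu_double {E : Type*} [NormedAddCommGroup E] [InnerProductSpace ℝ E]
    (ε : ℝ) (hε : 0 < ε) (T : E → E)
    (hT : ∀ x y : E, |‖T x - T y‖ - ‖x - y‖| < ε) (hT0 : T 0 = 0) (z : E) :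
    ‖T z - (2:ℝ)⁻¹ • T ((2:ℝ) • z)‖ ^ 2 ≤ 3 * ε * ‖z‖ + ε ^ 2 := by
  have h1 := hT z 0
  have h2 := hT ((2:ℝ) • z) 0
  have h3 := hT ((2:ℝ) • z) z
  rw [hT0, sub_zero, sub_zero] at h1 h2
  have h2z : (2:ℝ) • z - z = z := by
    rw [two_smul]; abel
  rw [h2z] at h3
  have hv2 : ‖(2:ℝ) • z‖ = 2 * ‖z‖ := by
    rw [norm_smul]; simp
  rw [hv2] at h2
  set u := T z with hu
  set v := T ((2:ℝ) • z) with hv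
  have hvu : ‖v - u‖ ^ 2 = ‖v‖^2 - 2*⟪v, u⟫ + ‖u‖^2 := norm_sub_sq_real v u
  have hid : ‖u - (2:ℝ)⁻¹ • v‖ ^ 2 = ‖u‖^2 - ⟪u, v⟫ + ‖v‖^2 / 4 := by
    rw [norm_sub_sq_real, real_inner_smul_right, norm_smul]
    ring_nf
    simp [norm_nonneg]
    ring
  have hsymm : ⟪u, v⟫ = ⟪v, u⟫ := (real_inner_comm u v).symm
  rw [abs_lt] at h1 h2 h3
  have h0u : (0:ℝ) ≤ ‖u‖ := norm_nonneg _
  have h0v : (0:ℝ) ≤ ‖v‖ := norm_nonneg _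
  have h0vu : (0:ℝ) ≤ ‖v - u‖ := norm_nonneg _
  have h0z : (0:ℝ) ≤ ‖z‖ := norm_nonneg _
  have e1 : ‖u‖^2 ≤ (‖z‖+ε)^2 := by nlinarith [h1.2, h0u]
  have e2 : ‖v - u‖^2 ≤ (‖z‖+ε)^2 := by nlinarith [h3.2, h0vu]
  have e3 : (2*‖z‖-ε)^2 - ε^2 ≤ ‖v‖^2 := by
    rcases le_or_gt (2*‖z‖-ε) 0 with h | h
    · nlinarith [h0v]
    · nlinarith [h2.1, h0v]
  have heq : ‖u - (2:ℝ)⁻¹ • v‖ ^ 2 = ‖u‖^2/2 + ‖v-u‖^2/2 - ‖v‖^2/4 := by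
    rw [hid, hsymm]; linarith [hvu]
  rw [heq]
  nlinarith [e1, e2, e3]

lemma hu_sqrt_add {a b : ℝ} (ha : 0 ≤ a) (hb : 0 ≤ b) :
    Real.sqrt (a + b) ≤ Real.sqrt a + Real.sqrt b := by
  have h1 : a + b ≤ (Real.sqrt a + Real.sqrt b) ^ 2 := by
    nlinarith [Real.sq_sqrt ha, Real.sq_sqrt hb,
      mul_nonneg (Real.sqrt_nonneg a) (Real.sqrt_nonneg b)]
  calc Real.sqrt (a + b) ≤ Real.sqrt ((Real.sqrt a + Real.sqrt b) ^ 2) :=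
        Real.sqrt_le_sqrt h1
    _ = Real.sqrt a + Real.sqrt b := Real.sqrt_sq (by positivity)

lemma hu_sqrt_pow (n : ℕ) : Real.sqrt ((2:ℝ) ^ n) = (Real.sqrt 2) ^ n := by
  induction n with
  | zero => simp
  | succ n ih =>
    rw [pow_succ, pow_succ, Real.sqrt_mul (by positivity), ih]

lemma hu_pow_inv_le (n : ℕ) : ((2:ℝ) ^ n)⁻¹ ≤ ((Real.sqrt 2)⁻¹) ^ n := by
  rw [← inv_pow]
  apply pow_le_pow_left₀ (by positivity)
  rw [inv_le_inv₀ (by norm_num) (by positivity)]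
  nlinarith [Real.sq_sqrt (by norm_num : (0:ℝ) ≤ 2), Real.sqrt_nonneg 2]

lemma hu_half_pow (n : ℕ) : ((2:ℝ)^n)⁻¹ * (Real.sqrt 2)^n = ((Real.sqrt 2)⁻¹)^n := by
  rw [← inv_pow, ← mul_pow]
  congr 1
  have hs2 : Real.sqrt 2 * Real.sqrt 2 = 2 := Real.mul_self_sqrt (by norm_num)
  field_simp
  rw [sq]; exact hs2

lemma hu_inv_sqrt2_lt_one : (Real.sqrt 2)⁻¹ < 1 := by
  rw [inv_lt_one_iff₀]
  right
  nlinarith [Real.sq_sqrt (by norm_num : (0:ℝ) ≤ 2), Real.sqrt_nonneg 2]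

section Main

variable {E : Type*} [NormedAddCommGroup E] [InnerProductSpace ℝ E]

/-- The step estimate for the dyadic sequence. -/
lemma hu_step (ε : ℝ) (hε : 0 < ε) (T : E → E)
    (hT : ∀ x y : E, |‖T x - T y‖ - ‖x - y‖| < ε) (hT0 : T 0 = 0) (x : E) (n : ℕ) :
    dist (((2:ℝ)^n)⁻¹ • T ((2:ℝ)^n • x)) (((2:ℝ)^(n+1))⁻¹ • T ((2:ℝ)^(n+1) • x))
      ≤ (Real.sqrt (3*ε*‖x‖) + ε) * ((Real.sqrt 2)⁻¹)^n := by
  have hz := hu_double ε hε T hT hT0 ((2:ℝ)^n • x)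
  have ht : (0:ℝ) < (2:ℝ)^n := by positivity
  have hnz : ‖(2:ℝ)^n • x‖ = (2:ℝ)^n * ‖x‖ := by
    rw [norm_smul, Real.norm_eq_abs, abs_of_pos ht]
  have e1 : ((2:ℝ)^(n+1))⁻¹ • T ((2:ℝ)^(n+1) • x)
      = ((2:ℝ)^n)⁻¹ • ((2:ℝ)⁻¹ • T ((2:ℝ) • ((2:ℝ)^n • x))) := by
    rw [smul_smul, smul_smul, ← mul_inv, ← pow_succ]
    congr 2
    rw [← pow_succ']
  rw [dist_eq_norm, e1, ← smul_sub, norm_smul, Real.norm_eq_abs,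
    abs_of_pos (inv_pos.2 ht)]
  have hA : ‖T ((2:ℝ)^n • x) - (2:ℝ)⁻¹ • T ((2:ℝ) • ((2:ℝ)^n • x))‖
      ≤ Real.sqrt (3*ε*((2:ℝ)^n * ‖x‖) + ε^2) := by
    rw [← Real.sqrt_sq (norm_nonneg (T ((2:ℝ)^n • x) - (2:ℝ)⁻¹ • T ((2:ℝ) • ((2:ℝ)^n • x))))]
    apply Real.sqrt_le_sqrt
    rw [hnz] at hz
    exact hz
  have hB : Real.sqrt (3*ε*((2:ℝ)^n * ‖x‖) + ε^2)
      ≤ (Real.sqrt 2)^n * (Real.sqrt (3*ε*‖x‖) + ε) := by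
    have h1 : Real.sqrt (3*ε*((2:ℝ)^n * ‖x‖) + ε^2)
        ≤ Real.sqrt (3*ε*((2:ℝ)^n * ‖x‖)) + Real.sqrt (ε^2) := by
      apply hu_sqrt_add (by positivity) (by positivity)
    have h2 : Real.sqrt (3*ε*((2:ℝ)^n * ‖x‖)) = (Real.sqrt 2)^n * Real.sqrt (3*ε*‖x‖) := by
      rw [show 3*ε*((2:ℝ)^n * ‖x‖) = (2:ℝ)^n * (3*ε*‖x‖) by ring,
        Real.sqrt_mul (by positivity), hu_sqrt_pow]
    have h3 : Real.sqrt (ε^2) = ε := Real.sqrt_sq hε.le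
    have h4 : (1:ℝ) ≤ (Real.sqrt 2)^n := one_le_pow₀ (by
      nlinarith [Real.sq_sqrt (by norm_num : (0:ℝ) ≤ 2), Real.sqrt_nonneg 2])
    rw [h2, h3] at h1
    nlinarith [Real.sqrt_nonneg (3*ε*‖x‖), h1]
  calc ((2:ℝ)^n)⁻¹ * ‖T ((2:ℝ)^n • x) - (2:ℝ)⁻¹ • T ((2:ℝ) • ((2:ℝ)^n • x))‖
      ≤ ((2:ℝ)^n)⁻¹ * ((Real.sqrt 2)^n * (Real.sqrt (3*ε*‖x‖) + ε)) := by
        apply mul_le_mul_of_nonneg_left (hA.trans hB) (inv_pos.2 ht).le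
    _ ≤ (Real.sqrt (3*ε*‖x‖) + ε) * ((Real.sqrt 2)⁻¹)^n := by
        have h5 : ((2:ℝ)^n)⁻¹ * (Real.sqrt 2)^n = ((Real.sqrt 2)⁻¹)^n := by
          have hs2 : (Real.sqrt 2) * (Real.sqrt 2) = 2 := Real.mul_self_sqrt (by norm_num)
          rw [← inv_pow, ← mul_pow]
          congr 1
          field_simp
          rw [sq]; exact hs2
        rw [mul_comm (Real.sqrt (3*ε*‖x‖) + ε), ← h5]
        exact le_of_eq (by ring)
    
end Main

open Filter in
/-- Hyers–Ulam (1945): every surjective ε-isometry of a complete real Hilbert space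
fixing the origin is within 10ε of an isometry, obtained as a dyadic limit. -/
theorem hyers_ulam {E : Type*} [NormedAddCommGroup E] [InnerProductSpace ℝ E]
    [CompleteSpace E] (ε : ℝ) (hε : 0 < ε) (T : E → E)
    (hsurj : Function.Surjective T)
    (hT : ∀ x y : E, |‖T x - T y‖ - ‖x - y‖| < ε) (hT0 : T 0 = 0) :
    ∃ I : E → E,
      (∀ x : E, Tendsto (fun n : ℕ => ((2 : ℝ) ^ n)⁻¹ • T ((2 : ℝ) ^ n • x))
        atTop (nhds (I x))) ∧
      (∀ x y : E, ‖I x - I y‖ = ‖x - y‖) ∧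
      (∀ x : E, ‖T x - I x‖ ≤ 10 * ε) := by
  have hrlt := hu_inv_sqrt2_lt_one
  have hrpos : (0:ℝ) ≤ (Real.sqrt 2)⁻¹ := by positivity
  have hden : (0:ℝ) < 1 - (Real.sqrt 2)⁻¹ := by linarith
  set s : E → ℕ → E := fun x n => ((2:ℝ)^n)⁻¹ • T ((2:ℝ)^n • x) with hs
  have hstep : ∀ (x : E) n, dist (s x n) (s x (n+1))
      ≤ (Real.sqrt (3*ε*‖x‖) + ε) * ((Real.sqrt 2)⁻¹)^n :=
    fun x n => hu_step ε hε T hT hT0 x n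
  have hcauchy : ∀ x : E, CauchySeq (s x) := fun x =>
    cauchySeq_of_le_geometric _ _ hrlt (hstep x)
  choose I hI using fun x => cauchySeq_tendsto_of_complete (hcauchy x)
  have hs0 : ∀ x : E, s x 0 = T x := by intro x; simp [hs]
  have hTI : ∀ x : E, ‖T x - I x‖ ≤ (Real.sqrt (3*ε*‖x‖) + ε) / (1 - (Real.sqrt 2)⁻¹) := by
    intro x
    have h := dist_le_of_le_geometric_of_tendsto₀ _ _ hrlt (hstep x) (hI x)
    rwa [hs0, dist_eq_norm] at h
  have hiso : ∀ x y : E, ‖I x - I y‖ = ‖x - y‖ := by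
    intro x y
    refine tendsto_nhds_unique (((hI x).sub (hI y)).norm) ?_
    have hb : ∀ n, ‖‖s x n - s y n‖ - ‖x - y‖‖ ≤ ε * ((2:ℝ)⁻¹)^n := by
      intro n
      have ht : (0:ℝ) < (2:ℝ)^n := by positivity
      have h2 := hT ((2:ℝ)^n • x) ((2:ℝ)^n • y)
      have e1 : s x n - s y n = ((2:ℝ)^n)⁻¹ • (T ((2:ℝ)^n • x) - T ((2:ℝ)^n • y)) := by
        simp [hs, smul_sub]
      have e2 : ‖(2:ℝ)^n • x - (2:ℝ)^n • y‖ = (2:ℝ)^n * ‖x - y‖ := by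
        rw [← smul_sub, norm_smul, Real.norm_eq_abs, abs_of_pos ht]
      rw [e2] at h2
      rw [Real.norm_eq_abs, e1, norm_smul, Real.norm_eq_abs, abs_of_pos (inv_pos.2 ht)]
      have e3 : ((2:ℝ)^n)⁻¹ * ‖T ((2:ℝ)^n • x) - T ((2:ℝ)^n • y)‖ - ‖x - y‖
          = ((2:ℝ)^n)⁻¹ * (‖T ((2:ℝ)^n • x) - T ((2:ℝ)^n • y)‖ - (2:ℝ)^n * ‖x - y‖) := by
        field_simp
      calc |((2:ℝ)^n)⁻¹ * ‖T ((2:ℝ)^n • x) - T ((2:ℝ)^n • y)‖ - ‖x - y‖|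
          = ((2:ℝ)^n)⁻¹ * |‖T ((2:ℝ)^n • x) - T ((2:ℝ)^n • y)‖ - (2:ℝ)^n * ‖x - y‖| := by
            rw [e3, abs_mul, abs_of_pos (inv_pos.2 ht)]
        _ ≤ ((2:ℝ)^n)⁻¹ * ε := by
            exact mul_le_mul_of_nonneg_left h2.le (inv_pos.2 ht).le
        _ = ε * ((2:ℝ)⁻¹)^n := by rw [inv_pow]; ring
    have hlim : Tendsto (fun n => ‖s x n - s y n‖ - ‖x - y‖) atTop (nhds 0) := by
      apply squeeze_zero_norm hb
      have := (tendsto_pow_atTop_nhds_zero_of_lt_one (by norm_num : (0:ℝ) ≤ 2⁻¹)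
        (by norm_num : (2:ℝ)⁻¹ < 1)).const_mul ε
      simpa using this
    have := hlim.add_const ‖x - y‖
    simpa using this
  have hI0 : I 0 = 0 := by
    refine tendsto_nhds_unique (hI 0) ?_
    have : (fun n => s 0 n) = fun _ : ℕ => (0:E) := by
      funext n; simp [hs, hT0]
    rw [show s 0 = fun _ : ℕ => (0:E) from this]
    exact tendsto_const_nhds
  have hnorm : ∀ x : E, ‖I x‖ = ‖x‖ := by
    intro x
    have := hiso x 0
    rwa [hI0, sub_zero, sub_zero] at this
  have hinner : ∀ x y : E, ⟪I x, I y⟫ = ⟪x, y⟫ := by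
    intro x y
    have e1 := norm_sub_sq_real (I x) (I y)
    have e2 := norm_sub_sq_real x y
    rw [hiso, hnorm, hnorm] at e1
    linarith
  have hhom2 : ∀ w : E, I ((2:ℝ) • w) = (2:ℝ) • I w := by
    intro w
    refine tendsto_nhds_unique (hI ((2:ℝ) • w)) ?_
    have he : ∀ n, s ((2:ℝ) • w) n = (2:ℝ) • s w (n+1) := by
      intro n
      show ((2:ℝ)^n)⁻¹ • T ((2:ℝ)^n • (2:ℝ) • w) = (2:ℝ) • (((2:ℝ)^(n+1))⁻¹ • T ((2:ℝ)^(n+1) • w))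
      rw [smul_smul, smul_smul, ← pow_succ]
      congr 1
      rw [pow_succ]
      field_simp
    rw [show s ((2:ℝ) • w) = fun n => (2:ℝ) • s w (n+1) from funext he]
    exact ((hI w).comp (tendsto_add_atTop_nat 1)).const_smul (2:ℝ)
  have hhomn : ∀ (w : E) (n : ℕ), I ((2:ℝ)^n • w) = (2:ℝ)^n • I w := by
    intro w n
    induction n with
    | zero => simp
    | succ n ih =>
      rw [pow_succ', mul_smul, hhom2, ih, mul_smul]
  have hzer : ∀ v : E, Tendsto (fun n : ℕ => ((2:ℝ)^n)⁻¹ • v) atTop (nhds 0) := by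
    intro v
    have h := (tendsto_pow_atTop_nhds_zero_of_lt_one (by norm_num : (0:ℝ) ≤ 2⁻¹)
      (by norm_num : (2:ℝ)⁻¹ < 1)).smul_const v
    rw [zero_smul] at h
    simpa [inv_pow] using h
  have l4 : Tendsto (fun n : ℕ => ((2:ℝ)^n)⁻¹) atTop (nhds 0) := by
    have := tendsto_pow_atTop_nhds_zero_of_lt_one (by norm_num : (0:ℝ) ≤ 2⁻¹)
      (by norm_num : (2:ℝ)⁻¹ < 1)
    simpa [inv_pow] using this
  have hkey : ∀ w x : E, |⟪I w, T x⟫ - ⟪w, x⟫| ≤ 2*ε*‖w‖ := by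
    intro w x
    set g : ℕ → ℝ := fun n =>
      ε*(‖s w n‖ + ‖w‖ + ‖s w n - ((2:ℝ)^n)⁻¹ • T x‖ + ‖w - ((2:ℝ)^n)⁻¹ • x‖)/2
        + ((2:ℝ)^n)⁻¹ * |‖T x‖^2 - ‖x‖^2| / 2 with hg
    have hgb : ∀ n, |⟪s w n, T x⟫ - ⟪w, x⟫| ≤ g n := by
      intro n
      have ht : (0:ℝ) < (2:ℝ)^n := by positivity
      set t := (2:ℝ)^n with htt
      set a := T (t • w) with ha
      have h1 := hT (t • w) 0
      rw [hT0, sub_zero, sub_zero] at h1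
      have hntw : ‖t • w‖ = t * ‖w‖ := by
        rw [norm_smul, Real.norm_eq_abs, abs_of_pos ht]
      have h2 := hT (t • w) x
      have hP : |‖a‖^2 - ‖t • w‖^2| ≤ ε * (‖a‖ + ‖t • w‖) := by
        have e : ‖a‖^2 - ‖t • w‖^2 = (‖a‖ - ‖t • w‖) * (‖a‖ + ‖t • w‖) := by ring
        rw [e, abs_mul, abs_of_nonneg (add_nonneg (norm_nonneg a) (norm_nonneg (t • w)))]
        exact mul_le_mul_of_nonneg_right h1.le
          (add_nonneg (norm_nonneg a) (norm_nonneg (t • w)))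
      have hQ : |‖a - T x‖^2 - ‖t • w - x‖^2| ≤ ε * (‖a - T x‖ + ‖t • w - x‖) := by
        have e : ‖a - T x‖^2 - ‖t • w - x‖^2
            = (‖a - T x‖ - ‖t • w - x‖) * (‖a - T x‖ + ‖t • w - x‖) := by ring
        rw [e, abs_mul, abs_of_nonneg (add_nonneg (norm_nonneg (a - T x)) (norm_nonneg (t • w - x)))]
        exact mul_le_mul_of_nonneg_right h2.le
          (add_nonneg (norm_nonneg (a - T x)) (norm_nonneg (t • w - x)))
      have ia := norm_sub_sq_real a (T x)
      have ib := norm_sub_sq_real (t • w) x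
      rw [real_inner_smul_left] at ib
      have hswn : s w n = t⁻¹ • a := rfl
      have hinn : ⟪s w n, T x⟫ = t⁻¹ * ⟪a, T x⟫ := by rw [hswn, real_inner_smul_left]
      have keyeq : ⟪s w n, T x⟫ - ⟪w, x⟫
          = t⁻¹ * ((‖a‖^2 - ‖t • w‖^2) - (‖a - T x‖^2 - ‖t • w - x‖^2)
            + (‖T x‖^2 - ‖x‖^2)) / 2 := by
        have hwx : ⟪w, x⟫ = t⁻¹ * (t * ⟪w, x⟫) := by field_simp
        rw [hinn, hwx]
        have hA : ⟪a, T x⟫ = (‖a‖^2 + ‖T x‖^2 - ‖a - T x‖^2)/2 := by linarith [ia]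
        have hB : t * ⟪w, x⟫ = (‖t • w‖^2 + ‖x‖^2 - ‖t • w - x‖^2)/2 := by linarith [ib]
        rw [hA, hB]; ring
      have hn1 : ‖s w n‖ = t⁻¹ * ‖a‖ := by
        rw [hswn, norm_smul, Real.norm_eq_abs, abs_of_pos (inv_pos.2 ht)]
      have hn2 : ‖s w n - t⁻¹ • T x‖ = t⁻¹ * ‖a - T x‖ := by
        rw [hswn, ← smul_sub, norm_smul, Real.norm_eq_abs, abs_of_pos (inv_pos.2 ht)]
      have hn3 : ‖w - t⁻¹ • x‖ = t⁻¹ * ‖t • w - x‖ := by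
        have e : w - t⁻¹ • x = t⁻¹ • (t • w - x) := by
          rw [smul_sub, smul_smul, inv_mul_cancel₀ (ne_of_gt ht), one_smul]
        rw [e, norm_smul, Real.norm_eq_abs, abs_of_pos (inv_pos.2 ht)]
      have habs : |(‖a‖^2 - ‖t • w‖^2) - (‖a - T x‖^2 - ‖t • w - x‖^2) + (‖T x‖^2 - ‖x‖^2)|
          ≤ ε * (‖a‖ + ‖t • w‖) + ε * (‖a - T x‖ + ‖t • w - x‖) + |‖T x‖^2 - ‖x‖^2| := by
        have h3 := abs_add_three (‖a‖^2 - ‖t • w‖^2) (-(‖a - T x‖^2 - ‖t • w - x‖^2))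
          (‖T x‖^2 - ‖x‖^2)
        rw [abs_neg] at h3
        rw [sub_eq_add_neg (‖a‖^2 - ‖t • w‖^2) (‖a - T x‖^2 - ‖t • w - x‖^2)]
        calc |(‖a‖^2 - ‖t • w‖^2) + -(‖a - T x‖^2 - ‖t • w - x‖^2) + (‖T x‖^2 - ‖x‖^2)|
            ≤ |‖a‖^2 - ‖t • w‖^2| + |‖a - T x‖^2 - ‖t • w - x‖^2| + |‖T x‖^2 - ‖x‖^2| := h3
          _ ≤ _ := by linarith [hP, hQ]
      rw [keyeq]
      have hsimp : g n = ε*(t⁻¹ * ‖a‖ + ‖w‖ + t⁻¹ * ‖a - T x‖ + t⁻¹ * ‖t • w - x‖)/2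
          + t⁻¹ * |‖T x‖^2 - ‖x‖^2| / 2 := by
        rw [hg]
        simp only [← htt, hn1, hn2, hn3]
      rw [hsimp]
      have habs2 : |t⁻¹ * ((‖a‖^2 - ‖t • w‖^2) - (‖a - T x‖^2 - ‖t • w - x‖^2)
          + (‖T x‖^2 - ‖x‖^2)) / 2|
          = t⁻¹ * |(‖a‖^2 - ‖t • w‖^2) - (‖a - T x‖^2 - ‖t • w - x‖^2)
          + (‖T x‖^2 - ‖x‖^2)| / 2 := by
        rw [abs_div, abs_mul, abs_inv, abs_of_pos ht]
        norm_num
      rw [habs2]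
      calc t⁻¹ * |(‖a‖^2 - ‖t • w‖^2) - (‖a - T x‖^2 - ‖t • w - x‖^2)
            + (‖T x‖^2 - ‖x‖^2)| / 2
          ≤ t⁻¹ * (ε * (‖a‖ + ‖t • w‖) + ε * (‖a - T x‖ + ‖t • w - x‖)
            + |‖T x‖^2 - ‖x‖^2|) / 2 := by
            apply div_le_div_of_nonneg_right ?_ ?_ |>.trans_eq rfl
            · exact mul_le_mul_of_nonneg_left habs (inv_pos.2 ht).le
            · norm_num
        _ = ε*(t⁻¹ * ‖a‖ + ‖w‖ + t⁻¹ * ‖a - T x‖ + t⁻¹ * ‖t • w - x‖)/2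
            + t⁻¹ * |‖T x‖^2 - ‖x‖^2| / 2 := by
            rw [hntw]
            field_simp
            ring
    have hglim : Tendsto g atTop (nhds (2*ε*‖w‖)) := by
      have l1 : Tendsto (fun n => s w n) atTop (nhds (I w)) := hI w
      have l2 : Tendsto (fun n : ℕ => ((2:ℝ)^n)⁻¹ • T x) atTop (nhds 0) := hzer (T x)
      have l3 : Tendsto (fun n : ℕ => ((2:ℝ)^n)⁻¹ • x) atTop (nhds 0) := hzer x
      have hmain := ((((l1.norm.add (tendsto_const_nhds (x := ‖w‖))).add
        ((l1.sub l2).norm)).add ((tendsto_const_nhds (x := w)).sub l3).norm).const_mul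
          ε).div_const 2 |>.add ((l4.mul_const (|‖T x‖^2 - ‖x‖^2|)).div_const 2)
      have hval : ε * (‖I w‖ + ‖w‖ + ‖I w - 0‖ + ‖w - 0‖) / 2
          + 0 * |‖T x‖^2 - ‖x‖^2| / 2 = 2*ε*‖w‖ := by
        rw [sub_zero, sub_zero, hnorm w]
        ring
      rw [hval] at hmain
      exact hmain
    exact le_of_tendsto_of_tendsto'
      (((hI w).inner (tendsto_const_nhds (x := T x))).sub_const ⟪w, x⟫).abs hglim hgb
  refine ⟨I, fun x => hI x, hiso, ?_⟩
  intro x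
  rcases eq_or_ne (T x - I x) 0 with h0 | h0
  · rw [h0, norm_zero]; positivity
  · set d := T x - I x with hd
    have hD : 0 < ‖d‖ := norm_pos_iff.2 h0
    choose z hz using fun n : ℕ => hsurj ((2:ℝ)^n • d)
    have hwd : Tendsto (fun n => I (((2:ℝ)^n)⁻¹ • z n)) atTop (nhds d) := by
      rw [tendsto_iff_norm_sub_tendsto_zero]
      have hb : ∀ n, ‖I (((2:ℝ)^n)⁻¹ • z n) - d‖
          ≤ ((Real.sqrt (3*ε*(‖d‖+ε)) + ε) / (1 - (Real.sqrt 2)⁻¹)) * ((Real.sqrt 2)⁻¹)^n := by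
        intro n
        have ht : (0:ℝ) < (2:ℝ)^n := by positivity
        have hzeq : (2:ℝ)^n • (((2:ℝ)^n)⁻¹ • z n) = z n := by
          rw [smul_smul, mul_inv_cancel₀ (ne_of_gt ht), one_smul]
        have hIz : I (z n) = (2:ℝ)^n • I (((2:ℝ)^n)⁻¹ • z n) := by
          conv_lhs => rw [← hzeq]
          rw [hhomn]
        have e1 : I (((2:ℝ)^n)⁻¹ • z n) - d = ((2:ℝ)^n)⁻¹ • (I (z n) - T (z n)) := by
          rw [hIz, hz n, smul_sub, smul_smul, smul_smul,
            inv_mul_cancel₀ (ne_of_gt ht), one_smul, one_smul]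
        rw [e1, norm_smul, Real.norm_eq_abs, abs_of_pos (inv_pos.2 ht)]
        have hzn : ‖z n‖ ≤ (2:ℝ)^n * (‖d‖ + ε) := by
          have h1 := hT (z n) 0
          rw [hT0, sub_zero, sub_zero, hz n] at h1
          have e2 : ‖(2:ℝ)^n • d‖ = (2:ℝ)^n * ‖d‖ := by
            rw [norm_smul, Real.norm_eq_abs, abs_of_pos ht]
          rw [e2] at h1
          have h2 : (1:ℝ) ≤ (2:ℝ)^n := one_le_pow₀ (by norm_num)
          rw [abs_lt] at h1
          nlinarith [h1.1]
        have hTIz : ‖I (z n) - T (z n)‖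
            ≤ (Real.sqrt (3*ε*‖z n‖) + ε) / (1 - (Real.sqrt 2)⁻¹) := by
          rw [norm_sub_rev]; exact hTI (z n)
        have hmono : Real.sqrt (3*ε*‖z n‖) ≤ (Real.sqrt 2)^n * Real.sqrt (3*ε*(‖d‖+ε)) := by
          calc Real.sqrt (3*ε*‖z n‖) ≤ Real.sqrt ((2:ℝ)^n * (3*ε*(‖d‖+ε))) := by
                apply Real.sqrt_le_sqrt
                nlinarith [hzn]
            _ = (Real.sqrt 2)^n * Real.sqrt (3*ε*(‖d‖+ε)) := by
                rw [Real.sqrt_mul (by positivity), hu_sqrt_pow]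
        have h1pow : (1:ℝ) ≤ (Real.sqrt 2)^n := one_le_pow₀ (by
          nlinarith [Real.sq_sqrt (by norm_num : (0:ℝ) ≤ 2), Real.sqrt_nonneg 2])
        calc ((2:ℝ)^n)⁻¹ * ‖I (z n) - T (z n)‖
            ≤ ((2:ℝ)^n)⁻¹ * (((Real.sqrt 2)^n * Real.sqrt (3*ε*(‖d‖+ε))
              + (Real.sqrt 2)^n * ε) / (1 - (Real.sqrt 2)⁻¹)) := by
              apply mul_le_mul_of_nonneg_left ?_ (inv_pos.2 ht).le
              apply hTIz.trans
              gcongr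
              nlinarith [h1pow]
          _ = ((Real.sqrt (3*ε*(‖d‖+ε)) + ε) / (1 - (Real.sqrt 2)⁻¹))
              * (((2:ℝ)^n)⁻¹ * (Real.sqrt 2)^n) := by ring
          _ = ((Real.sqrt (3*ε*(‖d‖+ε)) + ε) / (1 - (Real.sqrt 2)⁻¹))
              * ((Real.sqrt 2)⁻¹)^n := by rw [hu_half_pow]
      have hgeo : Tendsto (fun n : ℕ => ((Real.sqrt (3*ε*(‖d‖+ε)) + ε)
          / (1 - (Real.sqrt 2)⁻¹)) * ((Real.sqrt 2)⁻¹)^n) atTop (nhds 0) := by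
        have := (tendsto_pow_atTop_nhds_zero_of_lt_one hrpos hrlt).const_mul
          ((Real.sqrt (3*ε*(‖d‖+ε)) + ε) / (1 - (Real.sqrt 2)⁻¹))
        simpa using this
      exact squeeze_zero (fun n => norm_nonneg _) hb hgeo
    have hper : ∀ n, |⟪I (((2:ℝ)^n)⁻¹ • z n), d⟫| ≤ 2*ε*‖I (((2:ℝ)^n)⁻¹ • z n)‖ := by
      intro n
      have h1 := hkey (((2:ℝ)^n)⁻¹ • z n) x
      have h2 : ⟪(((2:ℝ)^n)⁻¹ • z n : E), x⟫ = ⟪I (((2:ℝ)^n)⁻¹ • z n), I x⟫ :=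
        (hinner _ _).symm
      rw [h2] at h1
      have h3 : ⟪I (((2:ℝ)^n)⁻¹ • z n), T x⟫ - ⟪I (((2:ℝ)^n)⁻¹ • z n), I x⟫
          = ⟪I (((2:ℝ)^n)⁻¹ • z n), d⟫ := by
        rw [hd, inner_sub_right]
      rw [h3] at h1
      rw [hnorm]
      exact h1
    have hlim1 : Tendsto (fun n => |⟪I (((2:ℝ)^n)⁻¹ • z n), d⟫|) atTop
        (nhds |⟪d, d⟫|) := ((hwd.inner tendsto_const_nhds).abs)
    have hlim2 : Tendsto (fun n => 2*ε*‖I (((2:ℝ)^n)⁻¹ • z n)‖) atTop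
        (nhds (2*ε*‖d‖)) := (hwd.norm).const_mul _
    have hfin : |⟪d, d⟫| ≤ 2*ε*‖d‖ := le_of_tendsto_of_tendsto' hlim1 hlim2 hper
    rw [real_inner_self_eq_norm_sq, abs_of_nonneg (by positivity)] at hfin
    have : ‖d‖ ≤ 2*ε := by nlinarith
    calc ‖T x - I x‖ = ‖d‖ := by rw [hd]
      _ ≤ 2*ε := this
      _ ≤ 10*ε := by linarith
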